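/- Let s ≥ 0 and let v be a valuation given by an integrable density that is s-normalized. Let R be an axes-aligned rectangle, let V = v(R), and let p, q ≥ 1 be integers with p + q ≤ V. Then at least one of the following holds: (i) there exists x ∈ ℝ such that v(R ∩ {(u,w) : u ≤ x}) ≥ p and v(R ∩ {(u,w) : u ≥ x + s}) ≥ q; or (ii) setting m = ⌈(⌊V⌋ − p − q)/2⌉, there exist axes-aligned rectangles Q₁,…,Q_m ⊆ R with v(Q_j) ≥ 1 for all j, such that for every j ∈ {1,…,m−1} the maximal y-coordinate of Q_j plus s is at most the minimal y-coordinate of Q_{j+1}. -/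

import Mathlib

open MeasureTheory

noncomputable section

/-- A point of the plane. -/
abbrev Pt := ℝ × ℝ

/-- The ℓ∞ distance between two points of the plane. -/
def linfDist (p q : Pt) : ℝ := max |p.1 - q.1| |p.2 - q.2|

/-- Two pieces of land are `s`-separated: every pair of points, one from each piece,
is at ℓ∞ distance at least `s`. -/
def SepSets (s : ℝ) (A B : Set Pt) : Prop := ∀ p ∈ A, ∀ q ∈ B, s ≤ linfDist p q

/-- An axes-aligned rectangle `[a,b] × [c,d]` with `a < b` and `c < d`. -/
structure Rect where
  a : ℝ
  b : ℝ
  c : ℝ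
  d : ℝ
  hab : a < b
  hcd : c < d

/-- The set of points of a rectangle. -/
def Rect.set (R : Rect) : Set Pt := Set.Icc R.a R.b ×ˢ Set.Icc R.c R.d

/-- The length of the shorter side of a rectangle. -/
def Rect.short (R : Rect) : ℝ := min (R.b - R.a) (R.d - R.c)

/-- The length of the longer side of a rectangle. -/
def Rect.long (R : Rect) : ℝ := max (R.b - R.a) (R.d - R.c)

/-- A rectangle is `r`-fat if its longer side is at most `r` times its shorter side. -/
def Rect.Fat (r : ℝ) (R : Rect) : Prop := R.long ≤ r * R.short

/-- The value of a piece `Z` under the density `f`. -/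
def val (f : Pt → ℝ) (Z : Set Pt) : ℝ := ∫ p in Z, f p

/-- The 1-out-of-`k` maximin share of an agent with density `f` on land `L`
with separation parameter `s`: the supremum over families of `k` axes-aligned
rectangles inside `L`, pairwise intersecting in zero measure and pairwise
`s`-separated, of the minimum value of a rectangle. -/
def MMS (f : Pt → ℝ) (L : Set Pt) (s : ℝ) (k : ℕ) : ℝ :=
  sSup {t : ℝ | ∃ P : Fin k → Rect,
    (∀ j, (P j).set ⊆ L) ∧
    (∀ i j, i ≠ j → volume ((P i).set ∩ (P j).set) = 0) ∧
    (∀ i j, i ≠ j → SepSets s ((P i).set) ((P j).set)) ∧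
    (∀ j, t ≤ val f ((P j).set))}

/-- A valuation given by density `f` is `s`-normalized: there are finitely many
pairwise `s`-separated axes-aligned rectangles, each of value at most 1,
such that `f` vanishes outside their union. -/
def SNormalized (s : ℝ) (f : Pt → ℝ) : Prop :=
  ∃ (N : ℕ) (Q : Fin N → Rect),
    (∀ i j, i ≠ j → SepSets s ((Q i).set) ((Q j).set)) ∧
    (∀ i, val f ((Q i).set) ≤ 1) ∧
    (∀ p, p ∉ ⋃ i, (Q i).set → f p = 0)

/-- The unit square `[0,1] × [0,1]`. -/
def unitSquare : Set Pt := Set.Icc (0 : ℝ) 1 ×ˢ Set.Icc (0 : ℝ) 1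

/-- `Guillotine s a0 a1 b0 b1 P`: the family `P` of rectangles forms an
`s`-separated guillotine partition of `[a0,a1] × [b0,b1]`. -/
inductive Guillotine (s : ℝ) : ℝ → ℝ → ℝ → ℝ → List Rect → Prop
  | single (a0 a1 b0 b1 : ℝ) (P : Rect)
      (h : P.set ⊆ Set.Icc a0 a1 ×ˢ Set.Icc b0 b1) :
      Guillotine s a0 a1 b0 b1 [P]
  | vert (a0 a1 b0 b1 a : ℝ) (h1 : a0 < a) (h2 : a < a1 - s)
      (P1 P2 : List Rect)
      (g1 : Guillotine s a0 a b0 b1 P1)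
      (g2 : Guillotine s (a + s) a1 b0 b1 P2) :
      Guillotine s a0 a1 b0 b1 (P1 ++ P2)
  | horiz (a0 a1 b0 b1 b : ℝ) (h1 : b0 < b) (h2 : b < b1 - s)
      (P1 P2 : List Rect)
      (g1 : Guillotine s a0 a1 b0 b P1)
      (g2 : Guillotine s a0 a1 (b + s) b1 P2) :
      Guillotine s a0 a1 b0 b1 (P1 ++ P2)


namespace Stmt10Aux

def mu (f : Pt → ℝ) : Measure Pt := volume.withDensity (fun z => ENNReal.ofReal (f z))

lemma mu_ne_top {f : Pt → ℝ} (hint : Integrable f) (Z : Set Pt) : mu f Z ≠ ⊤ := by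
  have h1 : mu f Z ≤ mu f Set.univ := measure_mono (Set.subset_univ _)
  have h2 : mu f Set.univ = ∫⁻ z, ENNReal.ofReal (f z) := by
    rw [mu, withDensity_apply _ MeasurableSet.univ, Measure.restrict_univ]
  exact ne_top_of_le_ne_top (by rw [h2]; exact hint.lintegral_lt_top.ne) h1

lemma val_eq {f : Pt → ℝ} (hint : Integrable f) (hpos : ∀ p, 0 ≤ f p) {Z : Set Pt}
    (hZ : MeasurableSet Z) : val f Z = (mu f Z).toReal := by
  rw [val, integral_eq_lintegral_of_nonneg_ae (Filter.Eventually.of_forall hpos)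
    hint.aestronglyMeasurable.restrict, mu, withDensity_apply _ hZ]

lemma val_mono {f : Pt → ℝ} (hint : Integrable f) (hpos : ∀ p, 0 ≤ f p) {A B : Set Pt}
    (h : A ⊆ B) : val f A ≤ val f B :=
  setIntegral_mono_set hint.integrableOn (Filter.Eventually.of_forall hpos)
    (HasSubset.Subset.eventuallyLE h)

lemma vline_null (x : ℝ) : (volume : Measure Pt) {z : Pt | z.1 = x} = 0 := by
  have h : {z : Pt | z.1 = x} = ({x} : Set ℝ) ×ˢ (Set.univ : Set ℝ) := by
    ext ⟨zx, zy⟩; simp [Set.mem_prod, eq_comm]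
  rw [h, show (volume : Measure Pt) = (volume : Measure ℝ).prod volume from rfl,
    Measure.prod_prod, Real.volume_singleton, zero_mul]

lemma mu_null {f : Pt → ℝ} {Z : Set Pt} (h : volume Z = 0) : mu f Z = 0 :=
  (withDensity_absolutelyContinuous volume _) h

lemma measurable_rect (R : Rect) : MeasurableSet R.set :=
  (measurableSet_Icc).prod measurableSet_Icc

lemma measurable_left (R : Rect) (x : ℝ) : MeasurableSet (R.set ∩ {z : Pt | z.1 ≤ x}) :=
  (measurable_rect R).inter (measurable_fst measurableSet_Iic)

lemma ivt_lemma (μ : Measure Pt) [IsFiniteMeasure μ] (hac : μ ≪ volume)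
    (R : Rect) (p : ℝ) (hp : 0 < p) (hpb : ENNReal.ofReal p ≤ μ R.set) :
    ∃ x : ℝ, μ (R.set ∩ {z : Pt | z.1 ≤ x}) = ENNReal.ofReal p := by
  set A : ℝ → Set Pt := fun x => R.set ∩ {z : Pt | z.1 ≤ x} with hA
  have hAmeas : ∀ x, MeasurableSet (A x) := fun x => measurable_left R x
  have hAmono : Monotone A := fun x y hxy =>
    Set.inter_subset_inter_right _ (fun z hz => le_trans hz hxy)
  set S : Set ℝ := {x | ENNReal.ofReal p ≤ μ (A x)} with hS
  have hSb : R.b ∈ S := by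
    have : A R.b = R.set := by
      apply Set.inter_eq_self_of_subset_left
      rintro ⟨zx, zy⟩ hz
      exact hz.1.2
    simpa [hS, this] using hpb
  have hSne : S.Nonempty := ⟨R.b, hSb⟩
  have hSlb : ∀ x ∈ S, R.a ≤ x := by
    intro x hx
    by_contra hlt
    push_neg at hlt
    have hempty : A x = ∅ := by
      ext z
      simp only [hA, Set.mem_inter_iff, Set.mem_empty_iff_false, iff_false]
      rintro ⟨hz1, hz2⟩
      exact absurd (le_trans hz1.1.1 hz2) (not_le.2 hlt)
    rw [hS, Set.mem_setOf_eq, hempty, measure_empty] at hx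
    exact (ENNReal.ofReal_pos.2 hp).ne' (le_zero_iff.mp hx)
  have hSbdd : BddBelow S := ⟨R.a, hSlb⟩
  set x₀ : ℝ := sInf S with hx₀
  refine ⟨x₀, le_antisymm ?_ ?_⟩
  · -- μ (A x₀) ≤ ofReal p
    have hU : (R.set ∩ {z : Pt | z.1 < x₀}) = ⋃ n : ℕ, A (x₀ - 1/(n+1)) := by
      ext z
      simp only [Set.mem_inter_iff, Set.mem_setOf_eq, Set.mem_iUnion, hA]
      constructor
      · rintro ⟨hz1, hz2⟩
        obtain ⟨n, hn⟩ := exists_nat_one_div_lt (sub_pos.2 hz2)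
        exact ⟨n, hz1, by rw [one_div] at hn ⊢; linarith⟩
      · rintro ⟨n, hz1, hz2⟩
        refine ⟨hz1, lt_of_le_of_lt hz2 ?_⟩
        have : (0:ℝ) < 1/(n+1) := by positivity
        linarith
    have hmono' : Monotone (fun n : ℕ => A (x₀ - 1/(n+1))) := by
      intro n m hnm
      apply hAmono
      have h1 : (1:ℝ)/(m+1) ≤ 1/(n+1) := by
        apply one_div_le_one_div_of_le (by positivity)
        exact_mod_cast by omega
      linarith
    have htend := tendsto_measure_iUnion_atTop (μ := μ) hmono'
    have hle : ∀ n : ℕ, μ (A (x₀ - 1/(n+1))) ≤ ENNReal.ofReal p := by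
      intro n
      have hpos' : (0:ℝ) < 1/(n+1) := by positivity
      have hnot : (x₀ - 1/(n+1)) ∉ S :=
        notMem_of_lt_csInf (by rw [← hx₀]; linarith) hSbdd
      rw [hS, Set.mem_setOf_eq, not_le] at hnot
      exact hnot.le
    have hlim : μ (R.set ∩ {z : Pt | z.1 < x₀}) ≤ ENNReal.ofReal p := by
      rw [hU]
      exact le_of_tendsto' htend (fun n => hle n)
    have hsub : A x₀ ⊆ (R.set ∩ {z : Pt | z.1 < x₀}) ∪ {z : Pt | z.1 = x₀} := by
      rintro z ⟨hz1, hz2⟩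
      have hz2' : z.1 ≤ x₀ := hz2
      rcases hz2'.lt_or_eq with h | h
      · exact Or.inl ⟨hz1, h⟩
      · exact Or.inr h
    have hsplit : μ (A x₀) ≤ μ (R.set ∩ {z : Pt | z.1 < x₀}) + μ {z : Pt | z.1 = x₀} :=
      (measure_mono hsub).trans (measure_union_le _ _)
    rw [hac (vline_null x₀), add_zero] at hsplit
    exact le_trans hsplit hlim
  · -- ofReal p ≤ μ (A x₀)
    have hI : A x₀ = ⋂ n : ℕ, A (x₀ + 1/(n+1)) := by
      ext z
      simp only [Set.mem_inter_iff, Set.mem_setOf_eq, Set.mem_iInter, hA]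
      constructor
      · rintro ⟨hz1, hz2⟩ n
        have : (0:ℝ) < 1/(n+1) := by positivity
        exact ⟨hz1, by linarith⟩
      · intro h
        refine ⟨(h 0).1, ?_⟩
        by_contra hlt
        push_neg at hlt
        obtain ⟨n, hn⟩ := exists_nat_one_div_lt (sub_pos.2 hlt)
        have h2 := (h n).2
        linarith
    have hanti : Antitone (fun n : ℕ => A (x₀ + 1/(n+1))) := by
      intro n m hnm
      apply hAmono
      have h1 : (1:ℝ)/(m+1) ≤ 1/(n+1) := by
        apply one_div_le_one_div_of_le (by positivity)
        exact_mod_cast by omega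
      linarith
    have htend := tendsto_measure_iInter_atTop (μ := μ)
      (fun n => (hAmeas _).nullMeasurableSet) hanti ⟨0, measure_ne_top μ _⟩
    have hge : ∀ n : ℕ, ENNReal.ofReal p ≤ μ (A (x₀ + 1/(n+1))) := by
      intro n
      have : (0:ℝ) < 1/(n+1) := by positivity
      obtain ⟨x, hxS, hxlt⟩ := exists_lt_of_csInf_lt hSne (show sInf S < x₀ + 1/(n+1) by
        rw [← hx₀]; linarith)
      exact le_trans hxS (measure_mono (hAmono hxlt.le))
    show ENNReal.ofReal p ≤ μ (A x₀)
    rw [hI]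
    exact ge_of_tendsto' htend hge

lemma box_lemma {f : Pt → ℝ} (hint : Integrable f) (hpos : ∀ p, 0 ≤ f p)
    (R : Rect) (x0 x1 : ℝ) {N : ℕ} (P : Fin N → Set Pt)
    (hPmeas : ∀ i, MeasurableSet (P i))
    (hPdisj : ∀ i j, i ≠ j → Disjoint (P i) (P j))
    (hPR : ∀ i, P i ⊆ R.set)
    (hPx : ∀ i, P i ⊆ {z : Pt | x0 ≤ z.1 ∧ z.1 ≤ x1})
    (c d : Fin N → ℝ)
    (hPy : ∀ i, P i ⊆ {z : Pt | c i ≤ z.2 ∧ z.2 ≤ d i})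
    (g : List (Fin N)) (hne : g ≠ []) (hnd : g.Nodup)
    (hsum : 1 ≤ (g.map (fun i => val f (P i))).sum) :
    ∃ B : Rect, B.set ⊆ R.set ∧ 1 ≤ val f B.set ∧
      (∀ u, (∀ i ∈ g, d i ≤ u) → B.d ≤ u) ∧
      (∃ i ∈ g, max R.c (c i) ≤ B.c) := by
  classical
  set G : Finset (Fin N) := g.toFinset with hG
  have hGne : G.Nonempty := by
    rcases List.exists_mem_of_ne_nil g hne with ⟨i, hi⟩
    exact ⟨i, List.mem_toFinset.2 hi⟩
  set cmin := G.inf' hGne c with hcmin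
  set dmax := G.sup' hGne d with hdmax
  set X : Set Pt :=
    Set.Icc (max R.a x0) (min R.b x1) ×ˢ Set.Icc (max R.c cmin) (min R.d dmax) with hX
  have hcover : ∀ i ∈ g, P i ⊆ X := by
    intro i hi z hz
    obtain ⟨h1a, h1c⟩ := hPR i hz
    have h2 := hPx i hz
    have h3 := hPy i hz
    have hiG : i ∈ G := List.mem_toFinset.2 hi
    exact ⟨⟨max_le h1a.1 h2.1, le_min h1a.2 h2.2⟩,
      ⟨max_le h1c.1 (le_trans (Finset.inf'_le c hiG) h3.1),
       le_min h1c.2 (le_trans h3.2 (Finset.le_sup' d hiG))⟩⟩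
  have hXmeas : MeasurableSet X := measurableSet_Icc.prod measurableSet_Icc
  have hval : 1 ≤ val f X := by
    calc (1:ℝ) ≤ (g.map (fun i => val f (P i))).sum := hsum
    _ = ∑ i ∈ G, val f (P i) := (List.sum_toFinset _ hnd).symm
    _ = val f (⋃ i ∈ G, P i) := by
        rw [val, integral_biUnion_finset G (fun i _ => hPmeas i)
          (fun i _ j _ hij => hPdisj i j hij) (fun i _ => hint.integrableOn)]
        rfl
    _ ≤ val f X := val_mono hint hpos (by
        intro z hz
        simp only [Set.mem_iUnion] at hz
        obtain ⟨i, hi, hzi⟩ := hz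
        exact hcover i (List.mem_toFinset.1 hi) hzi)
  have hvolX : volume X = ENNReal.ofReal (min R.b x1 - max R.a x0)
      * ENNReal.ofReal (min R.d dmax - max R.c cmin) := by
    rw [hX, show (volume : Measure Pt) = (volume : Measure ℝ).prod volume from rfl,
      Measure.prod_prod, Real.volume_Icc, Real.volume_Icc]
  have hXnn : ¬ (volume X = 0) := by
    intro h0
    have : val f X = 0 := by
      rw [val, Measure.restrict_eq_zero.2 h0, integral_zero_measure]
    linarith
  have hax : max R.a x0 < min R.b x1 := by
    by_contra hc
    push_neg at hc
    exact hXnn (by rw [hvolX, ENNReal.ofReal_eq_zero.2 (by linarith), zero_mul])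
  have hcy : max R.c cmin < min R.d dmax := by
    by_contra hc
    push_neg at hc
    exact hXnn (by rw [hvolX, ENNReal.ofReal_eq_zero.2 (by linarith : min R.d dmax - max R.c cmin ≤ 0), mul_zero])
  refine ⟨⟨max R.a x0, min R.b x1, max R.c cmin, min R.d dmax, hax, hcy⟩, ?_, ?_, ?_, ?_⟩
  · intro z hz
    exact ⟨⟨le_trans (le_max_left _ _) hz.1.1, le_trans hz.1.2 (min_le_left _ _)⟩,
      ⟨le_trans (le_max_left _ _) hz.2.1, le_trans hz.2.2 (min_le_left _ _)⟩⟩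
  · exact hval
  · intro u hu
    exact le_trans (min_le_right _ _) (Finset.sup'_le hGne d
      (fun i hi => hu i (List.mem_toFinset.1 hi)))
  · obtain ⟨i, hi, hieq⟩ := Finset.exists_mem_eq_inf' hGne c
    exact ⟨i, List.mem_toFinset.1 hi, by rw [← hieq, ← hcmin]⟩

lemma greedy_lemma {f : Pt → ℝ} (hint : Integrable f) (hpos : ∀ p, 0 ≤ f p)
    (R : Rect) (s : ℝ) (hs : 0 < s) (x0 x1 : ℝ) {N : ℕ} (P : Fin N → Set Pt)
    (hPmeas : ∀ i, MeasurableSet (P i))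
    (hPdisj : ∀ i j, i ≠ j → Disjoint (P i) (P j))
    (hPR : ∀ i, P i ⊆ R.set)
    (hPx : ∀ i, P i ⊆ {z : Pt | x0 ≤ z.1 ∧ z.1 ≤ x1})
    (c d : Fin N → ℝ)
    (hPy : ∀ i, P i ⊆ {z : Pt | c i ≤ z.2 ∧ z.2 ≤ d i})
    (hw1 : ∀ i, val f (P i) ≤ 1) :
    ∀ (m : ℕ) (l : List (Fin N)),
      l.Nodup →
      l.Pairwise (fun i j => d i + s ≤ c j) →
      (2 * m - 1 : ℝ) < (l.map (fun i => val f (P i))).sum →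
      ∃ Q : Fin m → Rect,
        (∀ j, (Q j).set ⊆ R.set) ∧
        (∀ j, 1 ≤ val f ((Q j).set)) ∧
        (∀ j : Fin m, ∀ h : (j:ℕ)+1 < m, (Q j).d + s ≤ (Q ⟨(j:ℕ)+1, h⟩).c) ∧
        (∀ j, ∃ i ∈ l, max R.c (c i) ≤ (Q j).c) := by
  intro m
  induction m with
  | zero =>
    intro l _ _ _
    exact ⟨Fin.elim0, fun j => j.elim0, fun j => j.elim0,
      fun j h => j.elim0, fun j => j.elim0⟩
  | succ m IH =>
    intro l hnd hpair hsum
    classical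
    set w : Fin N → ℝ := fun i => val f (P i) with hw
    have hsum' : (2 * m + 1 : ℝ) < (l.map w).sum := by
      push_cast at hsum
      linarith
    have hmnn : (0:ℝ) ≤ 2 * m := by positivity
    have hex : ∃ n, 1 ≤ ((l.take n).map w).sum := by
      refine ⟨l.length, ?_⟩
      rw [List.take_length]
      linarith
    set n := Nat.find hex with hn
    have hn1 : 1 ≤ ((l.take n).map w).sum := Nat.find_spec hex
    have hnpos : 0 < n := by
      rcases Nat.eq_zero_or_pos n with h0 | h
      · exfalso
        have := hn1
        rw [h0] at this
        simp at this
        linarith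
      · exact h
    have hnle : n ≤ l.length := by
      by_contra hc
      push_neg at hc
      have := Nat.find_min hex hc
      rw [List.take_length] at this
      exact this (by linarith)
    have hmin : ¬ (1 ≤ ((l.take (n-1)).map w).sum) := Nat.find_min hex (by omega)
    push_neg at hmin
    -- sum of g := l.take n is < 2
    have htake_eq : l.take n = l.take (n-1) ++ [l.get ⟨n-1, by omega⟩] := by
      conv_lhs => rw [show n = (n-1) + 1 by omega]
      rw [← List.take_concat_get (l := l) (i := n-1) (by omega), List.concat_eq_append]
      simp [List.get_eq_getElem]
    have hsumg_lt : ((l.take n).map w).sum < 2 := by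
      rw [htake_eq, List.map_append, List.sum_append]
      simp only [List.map_cons, List.map_nil, List.sum_cons, List.sum_nil, add_zero]
      have := hw1 (l.get ⟨n-1, by omega⟩)
      linarith
    -- split l into take/drop
    have hsplit : (l.map w).sum = ((l.take n).map w).sum + ((l.drop n).map w).sum := by
      conv_lhs => rw [← List.take_append_drop n l]
      rw [List.map_append, List.sum_append]
    have hrest : (2 * m - 1 : ℝ) < ((l.drop n).map w).sum := by
      rw [hsplit] at hsum'
      linarith
    have hnd' := hnd
    have hpair' := hpair
    rw [← List.take_append_drop n l] at hnd' hpair'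
    rw [List.pairwise_append] at hpair'
    rw [List.nodup_append] at hnd'
    obtain ⟨hndg, hndr, _⟩ := hnd'
    obtain ⟨hpg, hpr, hcross⟩ := hpair'
    obtain ⟨Q', hQ'1, hQ'2, hQ'3, hQ'4⟩ := IH (l.drop n) hndr hpr hrest
    have hgne : l.take n ≠ [] := by
      apply List.ne_nil_of_length_pos
      rw [List.length_take]
      omega
    obtain ⟨B, hB1, hB2, hB3, hB4⟩ := box_lemma hint hpos R x0 x1 P hPmeas hPdisj hPR hPx
      c d hPy (l.take n) hgne hndg hn1
    refine ⟨Fin.cases B Q', ?_, ?_, ?_, ?_⟩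
    · intro j
      induction j using Fin.cases with
      | zero => simpa using hB1
      | succ i => simpa using hQ'1 i
    · intro j
      induction j using Fin.cases with
      | zero => simpa using hB2
      | succ i => simpa using hQ'2 i
    · intro j
      induction j using Fin.cases with
      | zero =>
        intro h
        have hm : 0 < m := by simpa using h
        have hstep : (⟨(0 : Fin (m+1)).1 + 1, h⟩ : Fin (m+1)) = Fin.succ ⟨0, hm⟩ := by
          ext; simp
        rw [hstep]
        simp only [Fin.cases_zero, Fin.cases_succ]
        obtain ⟨i, hi, hile⟩ := hQ'4 ⟨0, hm⟩
        have hBd : B.d ≤ c i - s := by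
          apply hB3
          intro k hk
          have := hcross k hk i hi
          linarith
        have : c i ≤ max R.c (c i) := le_max_right _ _
        linarith
      | succ i =>
        intro h
        have h' : (i : ℕ) + 1 < m := by
          have := h
          simp only [Fin.val_succ] at this
          omega
        have hstep : (⟨(Fin.succ i : Fin (m+1)).1 + 1, h⟩ : Fin (m+1))
            = Fin.succ ⟨(i:ℕ)+1, h'⟩ := by
          ext; simp
        rw [hstep]
        simp only [Fin.cases_succ]
        exact hQ'3 i h'
    · intro j
      induction j using Fin.cases with
      | zero =>
        obtain ⟨i, hi, hile⟩ := hB4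
        exact ⟨i, List.take_subset n l hi, by simpa using hile⟩
      | succ i =>
        obtain ⟨k, hk, hkle⟩ := hQ'4 i
        exact ⟨k, List.drop_subset n l hk, by simpa using hkle⟩

end Stmt10Aux

/-- Existence of a vertical `p`:`q`-value cut or a vertical
`⌈(⌊V⌋−p−q)/2⌉`-rectangle stack for an `s`-normalized valuation. -/
theorem stmt10 (s : ℝ) (hs : 0 ≤ s) (f : Pt → ℝ) (hint : Integrable f)
    (hpos : ∀ p, 0 ≤ f p) (hnorm : SNormalized s f)
    (R : Rect) (V : ℝ) (hV : V = val f R.set)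
    (p q : ℕ) (hp : 1 ≤ p) (hq : 1 ≤ q) (hpq : (p : ℝ) + q ≤ V)
    (m : ℕ) (hm : (m : ℤ) = ⌈(((⌊V⌋ - p - q : ℤ) : ℝ)) / 2⌉) :
    (∃ x : ℝ, (p : ℝ) ≤ val f (R.set ∩ {z : Pt | z.1 ≤ x}) ∧
       (q : ℝ) ≤ val f (R.set ∩ {z : Pt | x + s ≤ z.1})) ∨
    (∃ Q : Fin m → Rect,
       (∀ j, (Q j).set ⊆ R.set) ∧
       (∀ j, 1 ≤ val f ((Q j).set)) ∧
       (∀ j : Fin m, ∀ h : (j : ℕ) + 1 < m,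
         (Q j).d + s ≤ (Q ⟨(j : ℕ) + 1, h⟩).c)) := by
  classical
  rcases Nat.eq_zero_or_pos m with hm0 | hmpos
  · subst hm0
    exact Or.inr ⟨Fin.elim0, fun j => j.elim0, fun j => j.elim0, fun j h => j.elim0⟩
  obtain ⟨N, T, hsep, hval1, hvanish⟩ := hnorm
  set μ := Stmt10Aux.mu f with hμ
  have hMT : ∀ Z, μ Z ≠ ⊤ := Stmt10Aux.mu_ne_top hint
  haveI : IsFiniteMeasure μ := ⟨lt_of_le_of_ne le_top (hMT Set.univ)⟩
  have hac : μ ≪ (volume : Measure Pt) := withDensity_absolutelyContinuous _ _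
  have hveq : ∀ {Z : Set Pt}, MeasurableSet Z → val f Z = (μ Z).toReal :=
    fun hZ => Stmt10Aux.val_eq hint hpos hZ
  have hRmeas := Stmt10Aux.measurable_rect R
  have hVval : V = (μ R.set).toReal := by rw [hV, hveq hRmeas]
  have hppos : (0:ℝ) < p := by exact_mod_cast hp
  have hq1 : (1:ℝ) ≤ q := by exact_mod_cast hq
  have hpV : ENNReal.ofReal p ≤ μ R.set := by
    rw [ENNReal.ofReal_le_iff_le_toReal (hMT _), ← hVval]
    linarith
  obtain ⟨x₀, hx₀⟩ := Stmt10Aux.ivt_lemma μ hac R p hppos hpV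
  have hleftval : ∀ x : ℝ, val f (R.set ∩ {z : Pt | z.1 ≤ x})
      = (μ (R.set ∩ {z : Pt | z.1 ≤ x})).toReal :=
    fun x => hveq (Stmt10Aux.measurable_left R x)
  -- lower bound on the value of the right piece
  have key : ∀ x : ℝ, V - (μ (R.set ∩ {z : Pt | z.1 ≤ x + s})).toReal
      ≤ val f (R.set ∩ {z : Pt | x + s ≤ z.1}) := by
    intro x
    set A := R.set ∩ {z : Pt | z.1 ≤ x + s} with hA
    have hAm : MeasurableSet A := Stmt10Aux.measurable_left R (x+s)
    have hAsub : A ⊆ R.set := Set.inter_subset_left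
    have h1 : R.set \ A ⊆ R.set ∩ {z : Pt | x + s ≤ z.1} := by
      rintro z ⟨hz1, hz2⟩
      have hnle : ¬ (z.1 ≤ x + s) := fun hle => hz2 ⟨hz1, hle⟩
      exact ⟨hz1, (not_le.1 hnle).le⟩
    have h2 : val f (R.set \ A) ≤ val f (R.set ∩ {z : Pt | x + s ≤ z.1}) :=
      Stmt10Aux.val_mono hint hpos h1
    have h3 : val f (R.set \ A) = (μ (R.set \ A)).toReal := hveq (hRmeas.diff hAm)
    have h4 : μ (R.set \ A) = μ R.set - μ A :=
      measure_diff hAsub hAm.nullMeasurableSet (hMT _)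
    have h5 : (μ R.set - μ A).toReal = (μ R.set).toReal - (μ A).toReal :=
      ENNReal.toReal_sub_of_le (measure_mono hAsub) (hMT _)
    rw [h3, h4, h5, ← hVval] at h2
    exact h2
  have hvl : val f (R.set ∩ {z : Pt | z.1 ≤ x₀}) = p := by
    rw [hleftval, hx₀, ENNReal.toReal_ofReal hppos.le]
  rcases eq_or_lt_of_le hs with hs0 | hspos
  · -- s = 0
    left
    refine ⟨x₀, le_of_eq hvl.symm, ?_⟩
    have hk := key x₀
    rw [← hs0, add_zero] at hk
    rw [hx₀, ENNReal.toReal_ofReal hppos.le] at hk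
    rw [← hs0, add_zero]
    linarith
  · -- s > 0
    by_cases hI : (∃ x : ℝ, (p : ℝ) ≤ val f (R.set ∩ {z : Pt | z.1 ≤ x}) ∧
       (q : ℝ) ≤ val f (R.set ∩ {z : Pt | x + s ≤ z.1}))
    · exact Or.inl hI
    right
    push_neg at hI
    have hsmall : val f (R.set ∩ {z : Pt | x₀ + s ≤ z.1}) < q := hI x₀ (le_of_eq hvl.symm)
    have hbig : V - q < (μ (R.set ∩ {z : Pt | z.1 ≤ x₀ + s})).toReal := by
      have := key x₀; linarith
    -- the strip
    set St : Set Pt := R.set ∩ (Prod.fst ⁻¹' Set.Icc x₀ (x₀ + s)) with hSt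
    have hStm : MeasurableSet St := hRmeas.inter (measurable_fst measurableSet_Icc)
    have hStsub : R.set ∩ {z : Pt | z.1 ≤ x₀ + s}
        ⊆ (R.set ∩ {z : Pt | z.1 ≤ x₀}) ∪ St := by
      rintro z ⟨hz1, hz2⟩
      rcases le_or_gt z.1 x₀ with h | h
      · exact Or.inl ⟨hz1, h⟩
      · exact Or.inr ⟨hz1, ⟨h.le, hz2⟩⟩
    have hStlow : V - (p:ℝ) - q < (μ St).toReal := by
      have h1 : μ (R.set ∩ {z : Pt | z.1 ≤ x₀ + s})
          ≤ μ (R.set ∩ {z : Pt | z.1 ≤ x₀}) + μ St :=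
        le_trans (measure_mono hStsub) (measure_union_le _ _)
      have h2 := ENNReal.toReal_mono
        (by exact ENNReal.add_ne_top.2 ⟨hMT _, hMT _⟩) h1
      rw [ENNReal.toReal_add (hMT _) (hMT _), hx₀, ENNReal.toReal_ofReal hppos.le] at h2
      linarith
    -- integer arithmetic: 2m - 1 ≤ ⌊V⌋ - p - q
    have hm2 : (2 * (m:ℤ) - 1 : ℤ) ≤ ⌊V⌋ - p - q := by
      have h1 : ((m:ℤ) : ℝ) < ((⌊V⌋ - p - q : ℤ) : ℝ) / 2 + 1 := by
        rw [hm]; exact Int.ceil_lt_add_one _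
      have h2 : ((2 * (m:ℤ) - 1 : ℤ) : ℝ) < ((⌊V⌋ - p - q : ℤ) : ℝ) + 1 := by
        push_cast at h1 ⊢; linarith
      exact_mod_cast Int.lt_add_one_iff.mp (by exact_mod_cast h2)
    have hfloor : ((⌊V⌋ : ℤ) : ℝ) ≤ V := Int.floor_le V
    have hStbig : (2 * (m:ℝ) - 1) < (μ St).toReal := by
      have : ((2 * (m:ℤ) - 1 : ℤ) : ℝ) ≤ ((⌊V⌋ - p - q : ℤ) : ℝ) := by exact_mod_cast hm2
      push_cast at this
      linarith
    -- decomposition into normalized rectangles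
    set U : Set Pt := ⋃ i, (T i).set with hU
    have hUm : MeasurableSet U := MeasurableSet.iUnion (fun i => Stmt10Aux.measurable_rect _)
    have hUc : μ Uᶜ = 0 := by
      rw [hμ, Stmt10Aux.mu, withDensity_apply _ hUm.compl]
      rw [setLIntegral_congr_fun hUm.compl
        (fun z hz => by rw [hvanish z hz, ENNReal.ofReal_zero])]
      simp
    have hdec : μ St ≤ ∑ i : Fin N, μ (St ∩ (T i).set) := by
      have h1 : St ⊆ (⋃ i, St ∩ (T i).set) ∪ Uᶜ := by
        intro z hz
        by_cases hzU : z ∈ U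
        · obtain ⟨A, ⟨i, hiA⟩, hzA⟩ := hzU
          exact Or.inl (Set.mem_iUnion.2 ⟨i, hz, by rw [← hiA] at hzA; exact hzA⟩)
        · exact Or.inr hzU
      calc μ St ≤ μ (⋃ i, St ∩ (T i).set) + μ Uᶜ :=
            le_trans (measure_mono h1) (measure_union_le _ _)
      _ = μ (⋃ i, St ∩ (T i).set) := by rw [hUc, add_zero]
      _ ≤ ∑ i : Fin N, μ (St ∩ (T i).set) := measure_iUnion_fintype_le _ _
    set w : Fin N → ℝ := fun i => val f (St ∩ (T i).set) with hw
    have hwmeas : ∀ i, MeasurableSet (St ∩ (T i).set) :=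
      fun i => hStm.inter (Stmt10Aux.measurable_rect _)
    have hweq : ∀ i, w i = (μ (St ∩ (T i).set)).toReal := fun i => hveq (hwmeas i)
    have hsumw : (2 * (m:ℝ) - 1) < ∑ i : Fin N, w i := by
      have hne : (∑ i : Fin N, μ (St ∩ (T i).set)) ≠ ⊤ :=
        ENNReal.sum_ne_top.2 (fun i _ => hMT _)
      have h1 := ENNReal.toReal_mono hne hdec
      rw [ENNReal.toReal_sum (fun i _ => hMT _)] at h1
      calc (2*(m:ℝ)-1) < (μ St).toReal := hStbig
      _ ≤ ∑ i : Fin N, (μ (St ∩ (T i).set)).toReal := h1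
      _ = ∑ i : Fin N, w i := by simp only [hweq]
    have hTdisj : ∀ i j : Fin N, i ≠ j → Disjoint (T i).set (T j).set := by
      intro i j hij
      rw [Set.disjoint_left]
      intro z hzi hzj
      have h := hsep i j hij z hzi z hzj
      rw [linfDist] at h
      simp only [sub_self, abs_zero, max_self] at h
      linarith
    have hord : ∀ i j : Fin N, w i ≠ 0 → w j ≠ 0 → i ≠ j →
        (T i).d + s ≤ (T j).c ∨ (T j).d + s ≤ (T i).c := by
      intro i j hwi hwj hij
      have hop : ∀ k : Fin N, w k ≠ 0 →
          ∃ z : Pt, z ∈ (T k).set ∧ x₀ < z.1 ∧ z.1 < x₀ + s := by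
        intro k hwk
        have hμk : μ (St ∩ (T k).set) ≠ 0 := by
          intro h0; exact hwk (by rw [hweq k, h0, ENNReal.toReal_zero])
        have hvol : volume (St ∩ (T k).set) ≠ 0 := fun h0 => hμk (hac h0)
        set O := (St ∩ (T k).set) ∩ {z : Pt | x₀ < z.1 ∧ z.1 < x₀ + s} with hO
        have hsub : St ∩ (T k).set
            ⊆ O ∪ ({z : Pt | z.1 = x₀} ∪ {z : Pt | z.1 = x₀ + s}) := by
          rintro z ⟨hz1, hz2⟩
          have hx : z.1 ∈ Set.Icc x₀ (x₀ + s) := hz1.2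
          rcases eq_or_lt_of_le hx.1 with h | h
          · exact Or.inr (Or.inl h.symm)
          rcases eq_or_lt_of_le hx.2 with h' | h'
          · exact Or.inr (Or.inr h')
          · exact Or.inl ⟨⟨hz1, hz2⟩, h, h'⟩
        have hOvol : volume O ≠ 0 := by
          intro h0
          apply hvol
          have h1 : volume (St ∩ (T k).set)
              ≤ volume O + volume ({z : Pt | z.1 = x₀} ∪ {z : Pt | z.1 = x₀ + s}) :=
            le_trans (measure_mono hsub) (measure_union_le _ _)
          have h2 : volume ({z : Pt | z.1 = x₀} ∪ {z : Pt | z.1 = x₀ + s}) = 0 :=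
            le_antisymm (le_trans (measure_union_le _ _)
              (by rw [Stmt10Aux.vline_null, Stmt10Aux.vline_null, add_zero])) zero_le
          rw [h0, h2, add_zero] at h1
          exact le_antisymm h1 zero_le
        rcases Set.eq_empty_or_nonempty O with hOe | hOne
        · exact absurd (by rw [hOe]; exact measure_empty) hOvol
        · obtain ⟨z, hz⟩ := hOne
          exact ⟨z, hz.1.2, hz.2.1, hz.2.2⟩
      obtain ⟨zi, hziT, hzi1, hzi2⟩ := hop i hwi
      obtain ⟨zj, hzjT, hzj1, hzj2⟩ := hop j hwj
      have hclaim : ∀ y y' : ℝ, y ∈ Set.Icc (T i).c (T i).d →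
          y' ∈ Set.Icc (T j).c (T j).d → s ≤ |y - y'| := by
        intro y y' hy hy'
        have h := hsep i j hij (zi.1, y) ⟨hziT.1, hy⟩ (zj.1, y') ⟨hzjT.1, hy'⟩
        rw [linfDist] at h
        simp only at h
        have hxlt : |zi.1 - zj.1| < s := abs_sub_lt_iff.2 ⟨by linarith, by linarith⟩
        rcases le_max_iff.1 h with h' | h'
        · linarith
        · exact h'
      by_cases h1 : (T i).d < (T j).c
      · left
        have hcl := hclaim (T i).d (T j).c ⟨(T i).hcd.le, le_refl _⟩ ⟨le_refl _, (T j).hcd.le⟩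
        rw [abs_of_nonpos (by linarith)] at hcl
        linarith
      by_cases h2 : (T j).d < (T i).c
      · right
        have hcl := hclaim (T i).c (T j).d ⟨le_refl _, (T i).hcd.le⟩ ⟨(T j).hcd.le, le_refl _⟩
        rw [abs_of_nonneg (by linarith)] at hcl
        linarith
      push_neg at h1 h2
      exfalso
      have hcl := hclaim (max (T i).c (T j).c) (max (T i).c (T j).c)
        ⟨le_max_left _ _, max_le (T i).hcd.le h1⟩ ⟨le_max_right _ _, max_le h2 (T j).hcd.le⟩
      simp only [sub_self, abs_zero] at hcl
      linarith
    set rel : Finset (Fin N) := Finset.univ.filter (fun i => w i ≠ 0) with hrel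
    have hsumrel : ∑ i ∈ rel, w i = ∑ i : Fin N, w i := Finset.sum_filter_ne_zero _
    set lef : Fin N → Fin N → Bool := fun i j => decide ((T i).c ≤ (T j).c) with hlef
    set l : List (Fin N) := (rel.toList).mergeSort lef with hl
    have hperm : l.Perm rel.toList := List.mergeSort_perm _ _
    have hlnd : l.Nodup := hperm.nodup_iff.2 rel.nodup_toList
    have hmeml : ∀ i, i ∈ l → (w i ≠ 0) := by
      intro i hi
      rw [hperm.mem_iff, Finset.mem_toList, hrel, Finset.mem_filter] at hi
      exact hi.2
    have hsorted : l.Pairwise (fun i j => (T i).c ≤ (T j).c) := by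
      have hms := List.pairwise_mergeSort (le := lef)
        (fun a b c hab hbc => by
          simp only [hlef, decide_eq_true_eq] at hab hbc ⊢; exact le_trans hab hbc)
        (fun a b => by
          simp only [hlef, Bool.or_eq_true, decide_eq_true_eq]; exact le_total _ _)
        rel.toList
      exact hms.imp (fun h => by simpa [hlef] using h)
    have hpairl : l.Pairwise (fun i j => (T i).d + s ≤ (T j).c) := by
      have hndpw : l.Pairwise (fun i j : Fin N => i ≠ j) := hlnd
      refine (hsorted.and hndpw).imp_of_mem ?_
      intro a b ha hb hab
      obtain ⟨hcle, hne⟩ := hab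
      rcases hord a b (hmeml a ha) (hmeml b hb) hne with h | h
      · exact h
      · exfalso
        linarith [(T b).hcd]
    have hsuml : (2 * (m:ℝ) - 1) < (List.map w l).sum := by
      have h1 : (List.map w l).sum = ∑ i ∈ rel, w i := by
        rw [(hperm.map w).sum_eq, ← List.sum_toFinset w rel.nodup_toList,
          Finset.toList_toFinset]
      rw [h1, hsumrel]
      exact hsumw
    obtain ⟨Q, hQ1, hQ2, hQ3, _⟩ := Stmt10Aux.greedy_lemma hint hpos R s hspos x₀ (x₀+s)
      (fun i => St ∩ (T i).set) hwmeas
      (fun i j hij => (hTdisj i j hij).mono Set.inter_subset_right Set.inter_subset_right)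
      (fun i => Set.Subset.trans Set.inter_subset_left Set.inter_subset_left)
      (fun i => by rintro z ⟨hz1, _⟩; exact ⟨hz1.2.1, hz1.2.2⟩)
      (fun i => (T i).c) (fun i => (T i).d)
      (fun i => by rintro z ⟨_, hz2⟩; exact ⟨hz2.2.1, hz2.2.2⟩)
      (fun i => le_trans (Stmt10Aux.val_mono hint hpos Set.inter_subset_right) (hval1 i))
      m l hlnd hpairl hsuml
    exact ⟨Q, hQ1, hQ2, hQ3⟩
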